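/- Assume the drift condition D(C,V,φ,b). Then for every δ > 0, E[ ∫₀^{τ_C(δ)} φ(V(X_s)) ds ] ≤ V(x) − 1 + bδ; in particular τ_C(δ) < ∞ ℙ-almost surely. -/

import Mathlib

open MeasureTheory Filter Set

lemma rcll_bdd (h : ℝ → ℝ)
    (hrc : ∀ t : ℝ, 0 ≤ t → Tendsto h (nhdsWithin t (Set.Ici t)) (nhds (h t)))
    (hll : ∀ t : ℝ, 0 < t → ∃ l, Tendsto h (nhdsWithin t (Set.Iio t)) (nhds l))
    (T : ℝ) : ∃ B, ∀ u ∈ Set.Icc (0:ℝ) T, h u ≤ B := by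
  have hK : IsCompact (Set.Icc (0:ℝ) T) := isCompact_Icc
  refine hK.induction_on (p := fun s => ∃ B, ∀ u ∈ s, h u ≤ B) ⟨0, by simp⟩
    (fun s t hst ⟨B, hB⟩ => ⟨B, fun u hu => hB u (hst hu)⟩)
    (fun s t ⟨B1, h1⟩ ⟨B2, h2⟩ => ⟨max B1 B2, fun u hu => hu.elim
      (fun h' => (h1 u h').trans (le_max_left _ _))
      (fun h' => (h2 u h').trans (le_max_right _ _))⟩) ?_
  intro y hy
  rcases eq_or_lt_of_le hy.1 with h0 | hpos
  · -- y = 0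
    have h0' : y = 0 := h0.symm
    subst h0'
    have hev : ∀ᶠ u in nhdsWithin 0 (Set.Ici 0), h u < h 0 + 1 :=
      (hrc 0 le_rfl).eventually_lt_const (by linarith)
    refine ⟨{u | h u < h 0 + 1}, ?_, ⟨h 0 + 1, fun u hu => le_of_lt hu⟩⟩
    exact nhdsWithin_mono 0 (fun u hu => hu.1) hev
  · obtain ⟨l, hl⟩ := hll y hpos
    have hev1 : ∀ᶠ u in nhdsWithin y (Set.Iio y), h u < max (h y) l + 1 :=
      hl.eventually_lt_const (by have := le_max_right (h y) l; linarith)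
    have hev2 : ∀ᶠ u in nhdsWithin y (Set.Ici y), h u < max (h y) l + 1 :=
      (hrc y hy.1).eventually_lt_const (by have := le_max_left (h y) l; linarith)
    have hev : ∀ᶠ u in nhds y, h u < max (h y) l + 1 := by
      rw [← nhdsLT_sup_nhdsGE y]
      exact ⟨hev1, hev2⟩
    exact ⟨{u | h u < max (h y) l + 1}, mem_nhdsWithin_of_mem_nhds hev,
      ⟨max (h y) l + 1, fun u hu => le_of_lt hu⟩⟩
open MeasureTheory Filter Set

lemma joint_meas {Ω E : Type*} [MeasurableSpace Ω] [MeasurableSpace E]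
    (X : ℝ → Ω → E) (hXm : ∀ t : ℝ, 0 ≤ t → Measurable (X t))
    (V : E → ℝ) (hV : Measurable V)
    (hrc : ∀ ω : Ω, ∀ t : ℝ, 0 ≤ t →
      Tendsto (fun s => V (X s ω)) (nhdsWithin t (Set.Ici t)) (nhds (V (X t ω)))) :
    Measurable (fun p : ℝ × Ω => V (X (max p.1 0) p.2)) := by
  have main : ∀ n : ℕ, Measurable
      (fun p : ℝ × Ω => V (X ((⌈max p.1 0 * 2 ^ n⌉₊ : ℝ) / 2 ^ n) p.2)) := by
    intro n
    have h1 : Measurable (fun p : ℝ × Ω => (p.2, (⌈max p.1 0 * 2 ^ n⌉₊ : ℕ))) :=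
      measurable_snd.prodMk (((measurable_fst.max measurable_const).mul_const _).nat_ceil)
    have h2 : Measurable (fun q : Ω × ℕ => V (X ((q.2 : ℝ) / 2 ^ n) q.1)) := by
      apply measurable_from_prod_countable_left
      intro k
      have : (0:ℝ) ≤ (k : ℝ) / 2 ^ n := by positivity
      exact hV.comp (hXm _ this)
    exact h2.comp h1
  apply measurable_of_tendsto_metrizable main
  rw [tendsto_pi_nhds]
  intro p
  set v := max p.1 0 with hv_def
  have hv : 0 ≤ v := le_max_right _ _
  have key : Tendsto (fun n : ℕ => (⌈v * 2 ^ n⌉₊ : ℝ) / 2 ^ n) atTop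
      (nhdsWithin v (Set.Ici v)) := by
    apply tendsto_nhdsWithin_of_tendsto_nhds_of_eventually_within
    · have hle : ∀ n : ℕ, (⌈v * 2 ^ n⌉₊ : ℝ) / 2 ^ n ≤ v + (1/2) ^ n := by
        intro n
        rw [div_le_iff₀ (by positivity)]
        have := Nat.ceil_lt_add_one (a := v * 2 ^ n) (by positivity)
        have h2 : ((1:ℝ)/2) ^ n * 2 ^ n = 1 := by
          rw [← mul_pow]; norm_num
        nlinarith [this]
      have hge : ∀ n : ℕ, v ≤ (⌈v * 2 ^ n⌉₊ : ℝ) / 2 ^ n := by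
        intro n
        rw [le_div_iff₀ (by positivity)]
        exact Nat.le_ceil _
      have h0 : Tendsto (fun n : ℕ => v + (1/2:ℝ) ^ n) atTop (nhds (v + 0)) :=
        tendsto_const_nhds.add (tendsto_pow_atTop_nhds_zero_of_lt_one (by norm_num) (by norm_num))
      rw [add_zero] at h0
      exact tendsto_of_tendsto_of_tendsto_of_le_of_le tendsto_const_nhds h0 hge hle
    · exact Filter.Eventually.of_forall fun n => by
        have := Nat.le_ceil (v * 2 ^ n)
        rw [Set.mem_Ici, le_div_iff₀ (by positivity)]
        exact this
  exact (hrc p.2 v hv).comp key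

open scoped ENNReal

theorem drift_condition_modulated_moment
    {Ω E : Type*} [MeasurableSpace Ω] [MeasurableSpace E]
    (μ : Measure Ω) [IsProbabilityMeasure μ]
    (ℱ : ℝ → MeasurableSpace Ω)
    (hℱ_mono : ∀ s t : ℝ, s ≤ t → ℱ s ≤ ℱ t)
    (hℱ_le : ∀ t : ℝ, ℱ t ≤ ‹MeasurableSpace Ω›)
    (X : ℝ → Ω → E)
    (hX_adapted : ∀ t : ℝ, 0 ≤ t → Measurable[ℱ t] (X t))
    (x : E) (hX0 : ∀ᵐ ω ∂μ, X 0 ω = x)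
    (C : Set E) (hC : MeasurableSet C)
    (V : E → ℝ) (hV_meas : Measurable V) (hV_one : ∀ y : E, 1 ≤ V y)
    (hVX_rc : ∀ ω : Ω, ∀ t : ℝ, 0 ≤ t →
      Tendsto (fun s => V (X s ω)) (nhdsWithin t (Set.Ici t)) (nhds (V (X t ω))))
    (hVX_ll : ∀ ω : Ω, ∀ t : ℝ, 0 < t →
      ∃ l : ℝ, Tendsto (fun s => V (X s ω)) (nhdsWithin t (Set.Iio t)) (nhds l))
    (φ φ' : ℝ → ℝ)
    (hφ_pos : ∀ u : ℝ, 1 ≤ u → 0 < φ u)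
    (hφ_mono : MonotoneOn φ (Set.Ici 1))
    (hφ_conc : ConcaveOn ℝ (Set.Ici 1) φ)
    (hφ_deriv : ∀ u ∈ Set.Ici (1:ℝ), HasDerivWithinAt φ (φ' u) (Set.Ici 1) u)
    (b : ℝ) (hb : 0 ≤ b)
    (Mdrift : ℝ → Ω → ℝ)
    (hM_def : ∀ t : ℝ, ∀ ω : Ω, Mdrift t ω =
      V (X t ω) - V (X 0 ω) + (∫ u in (0:ℝ)..t, φ (V (X u ω)))
        - b * ∫ u in (0:ℝ)..t, C.indicator (fun _ => (1:ℝ)) (X u ω))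
    (hV_int : ∀ t : ℝ, 0 ≤ t → Integrable (fun ω => V (X t ω)) μ)
    (hM_int : ∀ t : ℝ, 0 ≤ t → Integrable (Mdrift t) μ)
    (hM_adapted : ∀ t : ℝ, 0 ≤ t → Measurable[ℱ t] (Mdrift t))
    (hM_super : ∀ s t : ℝ, 0 ≤ s → s ≤ t → μ[Mdrift t|ℱ s] ≤ᵐ[μ] Mdrift s)
    (δ : ℝ) (hδ : 0 < δ)
    (τ : Ω → ℝ≥0∞)
    (hτ_def : ∀ ω : Ω, τ ω = sInf (ENNReal.ofReal '' {t : ℝ | δ ≤ t ∧ X t ω ∈ C}))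
    (hτ_stop : ∀ t : ℝ, 0 ≤ t → MeasurableSet[ℱ t] {ω : Ω | τ ω ≤ ENNReal.ofReal t}) :
    (∫⁻ ω, (∫⁻ s in {s : ℝ | 0 ≤ s ∧ ENNReal.ofReal s < τ ω},
        ENNReal.ofReal (φ (V (X s ω)))) ∂μ)
      ≤ ENNReal.ofReal (V x - 1 + b * δ) ∧
    ∀ᵐ ω ∂μ, τ ω < ⊤ := by
  classical
  have hXm : ∀ t : ℝ, 0 ≤ t → Measurable (X t) :=
    fun t ht => (hX_adapted t ht).mono (hℱ_le t) le_rfl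
  have hτm : Measurable τ := by
    apply measurable_of_Iic
    intro c
    by_cases hc : c = ⊤
    · simp [hc]
    · have : τ ⁻¹' (Set.Iic c) = {ω | τ ω ≤ ENNReal.ofReal c.toReal} := by
        ext ω; simp [ENNReal.ofReal_toReal hc]
      rw [this]
      exact hℱ_le _ _ (hτ_stop c.toReal ENNReal.toReal_nonneg)
  set φt : ℝ → ℝ := fun v => φ (max v 1) with hφt_def
  have hφt_mono : Monotone φt := fun a c hac =>
    hφ_mono (Set.mem_Ici.2 (le_max_right _ _)) (Set.mem_Ici.2 (le_max_right _ _)) (max_le_max hac le_rfl)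
  have hφt_meas : Measurable φt := hφt_mono.measurable
  have hφt_eq : ∀ y : E, φt (V y) = φ (V y) := fun y => by
    simp only [hφt_def, max_eq_left (hV_one y)]
  have hWmeas : Measurable (fun p : ℝ × Ω => V (X (max p.1 0) p.2)) :=
    joint_meas X hXm V hV_meas hVX_rc
  set g : ℝ → Ω → ℝ := fun u ω => φt (V (X (max u 0) ω)) with hg_def
  have hg_meas : Measurable (fun p : ℝ × Ω => g p.1 p.2) := hφt_meas.comp hWmeas
  have hg_path : ∀ ω, Measurable fun u => g u ω :=
    fun ω => hg_meas.comp (measurable_id.prodMk measurable_const)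
  have hg_eq : ∀ u : ℝ, 0 ≤ u → ∀ ω, g u ω = φ (V (X u ω)) := by
    intro u hu ω
    simp only [hg_def, max_eq_left hu]
    exact hφt_eq _
  have hg_pos : ∀ u ω, 0 < g u ω := fun u ω => hφ_pos _ (le_max_right _ _)
  have hφ1_pos : 0 < φ 1 := hφ_pos 1 le_rfl
  have hg_lb : ∀ u ω, φ 1 ≤ g u ω := fun u ω =>
    hφ_mono (Set.mem_Ici.2 le_rfl) (Set.mem_Ici.2 (le_max_right _ _)) (le_max_right _ _)
  have hbdd : ∀ (ω : Ω) (T : ℝ), ∃ B, ∀ u ∈ Set.Icc (0:ℝ) T, g u ω ≤ B := by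
    intro ω T
    obtain ⟨B, hB⟩ := rcll_bdd (fun s => V (X s ω)) (hVX_rc ω) (hVX_ll ω) T
    refine ⟨φt B, fun u hu => ?_⟩
    simp only [hg_def, max_eq_left hu.1]
    exact hφt_mono (hB u hu)
  -- τ facts
  have hτ_lb : ∀ ω, ENNReal.ofReal δ ≤ τ ω := by
    intro ω; rw [hτ_def ω]
    refine le_sInf ?_
    rintro _ ⟨t, ⟨ht, _⟩, rfl⟩
    exact ENNReal.ofReal_le_ofReal ht
  have hτ_pos : ∀ ω, 0 < τ ω := fun ω =>
    lt_of_lt_of_le (ENNReal.ofReal_pos.2 hδ) (hτ_lb ω)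
  have hτ_notC : ∀ ω, ∀ u : ℝ, δ ≤ u → ENNReal.ofReal u < τ ω → X u ω ∉ C := by
    intro ω u hu hlt hmem
    have : τ ω ≤ ENNReal.ofReal u := by
      rw [hτ_def]; exact sInf_le ⟨u, ⟨hu, hmem⟩, rfl⟩
    exact absurd hlt (not_lt.2 this)
  have hA_amb : ∀ s : ℝ, 0 ≤ s → MeasurableSet {ω | ENNReal.ofReal s < τ ω} := by
    intro s hs
    have : {ω | ENNReal.ofReal s < τ ω} = {ω | τ ω ≤ ENNReal.ofReal s}ᶜ := by
      ext ω; simp [not_le]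
    rw [this]
    exact (hℱ_le s _ (hτ_stop s hs)).compl
  -- the set S and its lintegral
  set S : ℝ → Ω → Set ℝ :=
    fun t ω => {s : ℝ | 0 ≤ s ∧ s ≤ t ∧ ENNReal.ofReal s < τ ω} with hS_def
  have hS_meas : ∀ t ω, MeasurableSet (S t ω) := by
    intro t ω
    have : S t ω = Set.Ici (0:ℝ) ∩ Set.Iic t ∩ ENNReal.ofReal ⁻¹' (Set.Iio (τ ω)) := by
      ext s
      simp only [hS_def, Set.mem_setOf_eq, Set.mem_inter_iff, Set.mem_Ici, Set.mem_Iic,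
        Set.mem_preimage, Set.mem_Iio, and_assoc]
    rw [this]
    exact (measurableSet_Ici.inter measurableSet_Iic).inter
      (ENNReal.measurable_ofReal measurableSet_Iio)
  set L : ℝ → Ω → ℝ≥0∞ :=
    fun t ω => ∫⁻ s in S t ω, ENNReal.ofReal (φ (V (X s ω))) with hL_def
  have hL_as_ind : ∀ t ω, L t ω
      = ∫⁻ s, ({p : Ω × ℝ | 0 ≤ p.2 ∧ p.2 ≤ t ∧ ENNReal.ofReal p.2 < τ p.1}.indicator
          (fun p => ENNReal.ofReal (g p.2 p.1)) (ω, s)) := by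
    intro t ω
    simp only [hL_def]
    rw [← lintegral_indicator (hS_meas t ω)]
    congr 1
    funext s
    by_cases hs : s ∈ S t ω
    · rw [Set.indicator_of_mem hs, Set.indicator_of_mem (by exact hs),
        hg_eq s hs.1 ω]
    · rw [Set.indicator_of_notMem hs, Set.indicator_of_notMem (by exact hs)]
  have hD_meas : ∀ t : ℝ, MeasurableSet {p : Ω × ℝ | 0 ≤ p.2 ∧ p.2 ≤ t ∧ ENNReal.ofReal p.2 < τ p.1} := by
    intro t
    have : {p : Ω × ℝ | 0 ≤ p.2 ∧ p.2 ≤ t ∧ ENNReal.ofReal p.2 < τ p.1}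
        = {p : Ω × ℝ | 0 ≤ p.2} ∩ ({p : Ω × ℝ | p.2 ≤ t} ∩ {p : Ω × ℝ | ENNReal.ofReal p.2 < τ p.1}) := by
      ext p
      simp only [Set.mem_setOf_eq, Set.mem_inter_iff]
    rw [this]
    exact (measurableSet_le measurable_const measurable_snd).inter
      ((measurableSet_le measurable_snd measurable_const).inter
       (measurableSet_lt (ENNReal.measurable_ofReal.comp measurable_snd)
         (hτm.comp measurable_fst)))
  have hL_meas : ∀ t : ℝ, Measurable (L t) := by
    intro t
    have hbase : Measurable (fun p : Ω × ℝ => ENNReal.ofReal (g p.2 p.1)) :=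
      ENNReal.measurable_ofReal.comp (hg_meas.comp (measurable_snd.prodMk measurable_fst))
    have h2 : Measurable fun ω : Ω => ∫⁻ s : ℝ,
        ({p : Ω × ℝ | 0 ≤ p.2 ∧ p.2 ≤ t ∧ ENNReal.ofReal p.2 < τ p.1}.indicator
          (fun p => ENNReal.ofReal (g p.2 p.1)) (ω, s)) :=
      Measurable.lintegral_prod_right' (ν := volume) (hbase.indicator (hD_meas t))
    have : L t = fun ω : Ω => ∫⁻ s : ℝ,
        ({p : Ω × ℝ | 0 ≤ p.2 ∧ p.2 ≤ t ∧ ENNReal.ofReal p.2 < τ p.1}.indicator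
          (fun p => ENNReal.ofReal (g p.2 p.1)) (ω, s)) := funext fun ω => hL_as_ind t ω
    rw [this]
    exact h2
  have hL_fin : ∀ (t : ℝ) (ω : Ω), L t ω < ⊤ := by
    intro t ω
    obtain ⟨B, hB⟩ := hbdd ω t
    have hle : L t ω ≤ ENNReal.ofReal B * volume (S t ω) := by
      rw [hL_def]
      calc ∫⁻ s in S t ω, ENNReal.ofReal (φ (V (X s ω)))
          ≤ ∫⁻ _ in S t ω, ENNReal.ofReal B := by
            refine setLIntegral_mono' (hS_meas t ω) fun s hs => ?_
            refine ENNReal.ofReal_le_ofReal ?_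
            rw [← hg_eq s hs.1 ω]
            exact hB s ⟨hs.1, hs.2.1⟩
        _ = ENNReal.ofReal B * volume (S t ω) := by
            rw [setLIntegral_const]
    have hvol : volume (S t ω) ≤ ENNReal.ofReal t := by
      calc volume (S t ω) ≤ volume (Set.Icc (0:ℝ) t) :=
            measure_mono fun s hs => ⟨hs.1, hs.2.1⟩
        _ = ENNReal.ofReal t := by rw [Real.volume_Icc]; congr 1; ring
    exact lt_of_le_of_lt (hle.trans (mul_le_mul_right hvol _))
      (ENNReal.mul_lt_top ENNReal.ofReal_lt_top ENNReal.ofReal_lt_top)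
  -- the key estimate for fixed horizon t and mesh n
  have key : ∀ t : ℝ, δ ≤ t → ∀ n : ℕ, 0 < n →
      ∫⁻ ω, L t ω ∂μ ≤ ENNReal.ofReal (V x - 1 + b * (δ + t / n)) := by
    intro t ht n hn
    have ht0 : (0:ℝ) < t := lt_of_lt_of_le hδ ht
    have hn0 : (0:ℝ) < (n:ℝ) := Nat.cast_pos.2 hn
    have htn : (0:ℝ) ≤ t / n := by positivity
    set m : ℕ → ℝ := fun i => (i : ℝ) * (t / n) with hm_def
    have hm_nonneg : ∀ i, 0 ≤ m i := fun i => by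
      have h1 : (0:ℝ) ≤ (i:ℝ) := Nat.cast_nonneg i
      simp only [hm_def]; positivity
    have hm_succ : ∀ i : ℕ, m (i+1) = m i + t / n := fun i => by
      simp only [hm_def]; push_cast; ring
    have hm_mono : Monotone m := fun i k hik => by
      simp only [hm_def]
      exact mul_le_mul_of_nonneg_right (Nat.cast_le.2 hik) htn
    have hm_n : m n = t := by
      simp only [hm_def]; field_simp
    have hm_zero : m 0 = 0 := by simp [hm_def]
    set A : ℕ → Set Ω := fun i => {ω | ENNReal.ofReal (m i) < τ ω} with hA_def
    have hA_ms : ∀ i, MeasurableSet (A i) := fun i => hA_amb (m i) (hm_nonneg i)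
    set d : ℕ → Ω → ℝ := fun i ω => Mdrift (m (i+1)) ω - Mdrift (m i) ω with hd_def
    have hd_int : ∀ i, Integrable (d i) μ :=
      fun i => (hM_int _ (hm_nonneg _)).sub (hM_int _ (hm_nonneg _))
    set Y : Ω → ℝ := fun ω => ∑ i ∈ Finset.range n, (A i).indicator (d i) ω with hY_def
    have hY_int : Integrable Y μ :=
      integrable_finset_sum _ fun i _ => (hd_int i).indicator (hA_ms i)
    have hY_exp : ∫ ω, Y ω ∂μ ≤ 0 := by
      simp only [hY_def]
      rw [integral_finset_sum _ fun i _ => (hd_int i).indicator (hA_ms i)]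
      refine Finset.sum_nonpos fun i _ => ?_
      rw [integral_indicator (hA_ms i)]
      haveI : SigmaFinite (μ.trim (hℱ_le (m i))) := by
        have h1 : IsFiniteMeasure (μ.trim (hℱ_le (m i))) := by
          constructor
          rw [trim_measurableSet_eq (hℱ_le (m i)) (@MeasurableSet.univ Ω (ℱ (m i)))]
          exact measure_lt_top μ _
        infer_instance
      have hsm : MeasurableSet[ℱ (m i)] (A i) := by
        have : A i = {ω | τ ω ≤ ENNReal.ofReal (m i)}ᶜ := by
          ext ω; simp [hA_def, not_le]
        rw [this]
        exact (hτ_stop (m i) (hm_nonneg i)).compl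
      have h1 : ∫ ω in A i, Mdrift (m (i+1)) ω ∂μ
          = ∫ ω in A i, (μ[Mdrift (m (i+1))|ℱ (m i)]) ω ∂μ :=
        (setIntegral_condExp (hℱ_le (m i)) (hM_int _ (hm_nonneg _)) hsm).symm
      have h2 : ∫ ω in A i, (μ[Mdrift (m (i+1))|ℱ (m i)]) ω ∂μ ≤ ∫ ω in A i, Mdrift (m i) ω ∂μ :=
        setIntegral_mono_ae integrable_condExp.integrableOn (hM_int _ (hm_nonneg _)).integrableOn
          (hM_super (m i) (m (i+1)) (hm_nonneg i) (hm_mono (Nat.le_succ i)))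
      have h3 : ∫ ω in A i, d i ω ∂μ
          = ∫ ω in A i, Mdrift (m (i+1)) ω ∂μ - ∫ ω in A i, Mdrift (m i) ω ∂μ := by
        simp only [hd_def]
        exact integral_sub (hM_int _ (hm_nonneg _)).integrableOn (hM_int _ (hm_nonneg _)).integrableOn
      rw [h3]
      linarith
    have hM0 : ∀ ω, Mdrift 0 ω = 0 := by
      intro ω; rw [hM_def]; simp
    have hpt : ∀ ω, (L t ω).toReal ≤ Y ω + V (X 0 ω) - 1 + b * (δ + t / n) := by
      intro ω
      have hP0 : ¬ (τ ω ≤ ENNReal.ofReal (m 0)) := by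
        rw [hm_zero, ENNReal.ofReal_zero]
        exact not_le.2 (hτ_pos ω)
      obtain ⟨j, hj1, hjn, hjlt, hPge, hjprop⟩ :
          ∃ j : ℕ, 1 ≤ j ∧ j ≤ n ∧ (∀ i < j, ¬ (τ ω ≤ ENNReal.ofReal (m i))) ∧
            (∀ i, j ≤ i → i < n → τ ω ≤ ENNReal.ofReal (m i)) ∧
            (∀ u : ℝ, 0 ≤ u → u ≤ t → ENNReal.ofReal u < τ ω → u ≤ m j) := by
        by_cases hex : ∃ i, τ ω ≤ ENNReal.ofReal (m i)
        · by_cases hcmp : Nat.find hex ≤ n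
          · refine ⟨Nat.find hex, ?_, hcmp, fun i hi => Nat.find_min hex hi, ?_, ?_⟩
            · rcases Nat.eq_zero_or_pos (Nat.find hex) with h0 | h0
              · exact absurd (h0 ▸ Nat.find_spec hex) hP0
              · exact h0
            · intro i hji _
              exact le_trans (Nat.find_spec hex) (ENNReal.ofReal_le_ofReal (hm_mono hji))
            · intro u hu hut hlt
              have h4 : ENNReal.ofReal u < ENNReal.ofReal (m (Nat.find hex)) :=
                lt_of_lt_of_le hlt (Nat.find_spec hex)
              exact le_of_lt (ENNReal.ofReal_lt_ofReal_iff'.1 h4).1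
          · refine ⟨n, hn, le_rfl,
              fun i hi => Nat.find_min hex (lt_of_lt_of_le hi (le_of_not_ge hcmp)),
              fun i hji hin => absurd (lt_of_le_of_lt hji hin) (lt_irrefl n), ?_⟩
            intro u _ hut _
            rw [hm_n]; exact hut
        · refine ⟨n, hn, le_rfl, fun i _ hPi => hex ⟨i, hPi⟩,
            fun i hji hin => absurd (lt_of_le_of_lt hji hin) (lt_irrefl n), ?_⟩
          intro u _ hut _
          rw [hm_n]; exact hut
      have hYω : Y ω = Mdrift (m j) ω := by
        have h1 : Y ω = ∑ i ∈ Finset.range n, (if i < j then d i ω else 0) := by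
          simp only [hY_def]
          refine Finset.sum_congr rfl fun i hi => ?_
          rw [Finset.mem_range] at hi
          by_cases hij : i < j
          · rw [if_pos hij, Set.indicator_of_mem (show ω ∈ A i from not_le.1 (hjlt i hij))]
          · rw [if_neg hij, Set.indicator_of_notMem
              (show ω ∉ A i from not_lt.2 (hPge i (le_of_not_gt hij) hi))]
        have h2 : ∑ i ∈ Finset.range n, (if i < j then d i ω else 0)
            = ∑ i ∈ Finset.range j, d i ω := by
          rw [Finset.range_eq_Ico, ← Finset.sum_Ico_consecutive _ (Nat.zero_le j) hjn,
            ← Finset.range_eq_Ico]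
          have hz : ∑ i ∈ Finset.Ico j n, (if i < j then d i ω else 0) = 0 :=
            Finset.sum_eq_zero fun i hi => if_neg (not_lt.2 (Finset.mem_Ico.1 hi).1)
          have ha : ∑ i ∈ Finset.range j, (if i < j then d i ω else 0)
              = ∑ i ∈ Finset.range j, d i ω :=
            Finset.sum_congr rfl fun i hi => if_pos (Finset.mem_range.1 hi)
          rw [hz, ha, add_zero]
        have h3 : ∑ i ∈ Finset.range j, d i ω = Mdrift (m j) ω - Mdrift (m 0) ω := by
          simpa only [hd_def] using Finset.sum_range_sub (fun i => Mdrift (m i) ω) j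
        rw [h1, h2, h3, hm_zero, hM0, sub_zero]
      have hr0 : 0 ≤ m j := hm_nonneg j
      have hrt : m j ≤ t := by rw [← hm_n]; exact hm_mono hjn
      obtain ⟨B, hB⟩ := hbdd ω t
      have hint_g : IntegrableOn (fun u => g u ω) (Set.Ioc 0 (m j)) volume := by
        have hconst : IntegrableOn (fun _ : ℝ => B) (Set.Ioc 0 (m j)) volume :=
          integrableOn_const measure_Ioc_lt_top.ne
        refine Integrable.mono' hconst ((hg_path ω).aestronglyMeasurable) ?_
        rw [ae_restrict_iff' measurableSet_Ioc]
        refine ae_of_all _ fun u hu => ?_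
        rw [Real.norm_eq_abs, abs_of_nonneg (hg_pos u ω).le]
        exact hB u ⟨hu.1.le, hu.2.trans hrt⟩
      have hIr : (L t ω).toReal ≤ ∫ u in (0:ℝ)..(m j), φ (V (X u ω)) := by
        have e1 : ∫ u in (0:ℝ)..(m j), φ (V (X u ω)) = ∫ u in Set.Ioc 0 (m j), g u ω := by
          rw [intervalIntegral.integral_of_le hr0]
          exact setIntegral_congr_fun measurableSet_Ioc fun u hu => (hg_eq u hu.1.le ω).symm
        have hst : S t ω ≤ᵐ[volume] Set.Ioc 0 (m j) := by
          have h0 : ∀ᵐ u : ℝ, u ≠ (0:ℝ) := by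
            rw [ae_iff]
            simp only [not_not, Set.setOf_eq_eq_singleton]
            exact measure_singleton 0
          filter_upwards [h0] with u hu hmem
          exact ⟨(hmem.1).lt_of_ne' hu, hjprop u hmem.1 hmem.2.1 hmem.2.2⟩
        have e2 : ∫ u in S t ω, g u ω ≤ ∫ u in Set.Ioc 0 (m j), g u ω :=
          setIntegral_mono_set hint_g (ae_of_all _ fun u => (hg_pos u ω).le) hst
        have e3 : ∫ u in S t ω, g u ω = (L t ω).toReal := by
          simp only [hL_def]
          rw [integral_eq_lintegral_of_nonneg_ae (ae_of_all _ fun u => (hg_pos u ω).le)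
            ((hg_path ω).aestronglyMeasurable)]
          congr 1
          refine setLIntegral_congr_fun (hS_meas t ω) (fun u hu => ?_)
          rw [hg_eq u hu.1 ω]
        rw [e1]
        linarith
      have hJr : ∫ u in (0:ℝ)..(m j), C.indicator (fun _ => (1:ℝ)) (X u ω) ≤ δ + t / n := by
        by_cases hJi : IntervalIntegrable (fun u => C.indicator (fun _ => (1:ℝ)) (X u ω))
            volume 0 (m j)
        · have hqr : m (j-1) ≤ m j := hm_mono (Nat.sub_le j 1)
          have hgap : m j - m (j-1) = t / n := by
            have hsp : j - 1 + 1 = j := Nat.succ_pred_eq_of_pos hj1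
            calc m j - m (j-1) = m (j - 1 + 1) - m (j-1) := by rw [hsp]
              _ = t / n := by rw [hm_succ]; ring
          have hqτ : ENNReal.ofReal (m (j-1)) < τ ω :=
            not_le.1 (hjlt (j-1) (Nat.sub_lt hj1 one_pos))
          have hind1 : IntervalIntegrable ((Set.Icc (0:ℝ) δ).indicator (fun _ => (1:ℝ)))
              volume 0 (m j) :=
            (((integrable_indicator_iff measurableSet_Icc).2
              (integrableOn_const measure_Icc_lt_top.ne))).intervalIntegrable
          have hind2 : IntervalIntegrable ((Set.Icc (m (j-1)) (m j)).indicator (fun _ => (1:ℝ)))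
              volume 0 (m j) :=
            (((integrable_indicator_iff measurableSet_Icc).2
              (integrableOn_const measure_Icc_lt_top.ne))).intervalIntegrable
          have hψi : IntervalIntegrable (fun u => (Set.Icc (0:ℝ) δ).indicator (fun _ => (1:ℝ)) u
              + (Set.Icc (m (j-1)) (m j)).indicator (fun _ => (1:ℝ)) u) volume 0 (m j) :=
            hind1.add hind2
          have hpt2 : ∀ u ∈ Set.Icc (0:ℝ) (m j), C.indicator (fun _ => (1:ℝ)) (X u ω)
              ≤ (Set.Icc (0:ℝ) δ).indicator (fun _ => (1:ℝ)) u
                + (Set.Icc (m (j-1)) (m j)).indicator (fun _ => (1:ℝ)) u := by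
            intro u hu
            have hle1 : C.indicator (fun _ => (1:ℝ)) (X u ω) ≤ 1 := by
              by_cases hXC : X u ω ∈ C
              · rw [Set.indicator_of_mem hXC]
              · rw [Set.indicator_of_notMem hXC]; norm_num
            have hn1 : (0:ℝ) ≤ (Set.Icc (0:ℝ) δ).indicator (fun _ => (1:ℝ)) u :=
              Set.indicator_nonneg (fun _ _ => zero_le_one) u
            have hn2 : (0:ℝ) ≤ (Set.Icc (m (j-1)) (m j)).indicator (fun _ => (1:ℝ)) u :=
              Set.indicator_nonneg (fun _ _ => zero_le_one) u
            by_cases h1 : u ≤ δ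
            · have : (Set.Icc (0:ℝ) δ).indicator (fun _ => (1:ℝ)) u = 1 :=
                Set.indicator_of_mem (Set.mem_Icc.2 ⟨hu.1, h1⟩) _
              linarith
            · by_cases h2 : u < m (j-1)
              · have hXu : X u ω ∉ C := by
                  refine hτ_notC ω u (le_of_not_ge h1) ?_
                  exact lt_trans ((ENNReal.ofReal_lt_ofReal_iff
                    (lt_of_le_of_lt hu.1 h2)).2 h2) hqτ
                rw [Set.indicator_of_notMem hXu]
                linarith
              · have : (Set.Icc (m (j-1)) (m j)).indicator (fun _ => (1:ℝ)) u = 1 :=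
                  Set.indicator_of_mem (Set.mem_Icc.2 ⟨not_lt.1 h2, hu.2⟩) _
                linarith
          have hcomp := intervalIntegral.integral_mono_on hr0 hJi hψi hpt2
          have hgen : ∀ a c : ℝ, a ≤ c →
              (∫ u in (0:ℝ)..(m j), (Set.Icc a c).indicator (fun _ => (1:ℝ)) u) ≤ c - a := by
            intro a c hac
            rw [intervalIntegral.integral_of_le hr0, setIntegral_indicator measurableSet_Icc,
              setIntegral_const, smul_eq_mul, mul_one]
            have hv : volume (Set.Ioc 0 (m j) ∩ Set.Icc a c) ≤ ENNReal.ofReal (c - a) := by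
              refine le_trans (measure_mono Set.inter_subset_right) ?_
              rw [Real.volume_Icc]
            calc (volume (Set.Ioc 0 (m j) ∩ Set.Icc a c)).toReal
                ≤ (ENNReal.ofReal (c - a)).toReal :=
                  ENNReal.toReal_mono ENNReal.ofReal_ne_top hv
              _ = c - a := ENNReal.toReal_ofReal (by linarith)
          have hsplit : ∫ u in (0:ℝ)..(m j), ((Set.Icc (0:ℝ) δ).indicator (fun _ => (1:ℝ)) u
              + (Set.Icc (m (j-1)) (m j)).indicator (fun _ => (1:ℝ)) u)
              = (∫ u in (0:ℝ)..(m j), (Set.Icc (0:ℝ) δ).indicator (fun _ => (1:ℝ)) u)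
                + ∫ u in (0:ℝ)..(m j), (Set.Icc (m (j-1)) (m j)).indicator (fun _ => (1:ℝ)) u :=
            intervalIntegral.integral_add hind1 hind2
          have hg1 := hgen 0 δ hδ.le
          have hg2 := hgen (m (j-1)) (m j) hqr
          calc ∫ u in (0:ℝ)..(m j), C.indicator (fun _ => (1:ℝ)) (X u ω)
              ≤ _ := hcomp
            _ ≤ δ + t / n := by rw [hsplit]; rw [hgap] at hg2; linarith
        · rw [intervalIntegral.integral_undef hJi]
          positivity
      rw [hYω, hM_def (m j) ω]
      have hV1 : 1 ≤ V (X (m j) ω) := hV_one _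
      have hbJ : b * (∫ u in (0:ℝ)..(m j), C.indicator (fun _ => (1:ℝ)) (X u ω))
          ≤ b * (δ + t / n) := mul_le_mul_of_nonneg_left hJr hb
      linarith
    have hG_meas : Measurable fun ω => (L t ω).toReal := (hL_meas t).ennreal_toReal
    have hZ1 : Integrable (fun ω => Y ω + V (X 0 ω)) μ := hY_int.add (hV_int 0 le_rfl)
    have hZ2 : Integrable (fun ω => Y ω + V (X 0 ω) - 1) μ := hZ1.sub (integrable_const 1)
    have hZ_int : Integrable (fun ω => Y ω + V (X 0 ω) - 1 + b * (δ + t / n)) μ :=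
      hZ2.add (integrable_const _)
    have hG_int : Integrable (fun ω => (L t ω).toReal) μ := by
      refine Integrable.mono' hZ_int hG_meas.aestronglyMeasurable (ae_of_all _ fun ω => ?_)
      rw [Real.norm_eq_abs, abs_of_nonneg ENNReal.toReal_nonneg]
      exact hpt ω
    have hfinal1 : ∫⁻ ω, L t ω ∂μ = ENNReal.ofReal (∫ ω, (L t ω).toReal ∂μ) := by
      rw [ofReal_integral_eq_lintegral_ofReal hG_int (ae_of_all _ fun ω => ENNReal.toReal_nonneg)]
      exact lintegral_congr fun ω => (ENNReal.ofReal_toReal (hL_fin t ω).ne).symm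
    rw [hfinal1]
    apply ENNReal.ofReal_le_ofReal
    have hI1 : ∫ ω, (L t ω).toReal ∂μ ≤ ∫ ω, (Y ω + V (X 0 ω) - 1 + b * (δ + t / n)) ∂μ :=
      integral_mono hG_int hZ_int hpt
    have eA : ∫ ω, (Y ω + V (X 0 ω) - 1 + b * (δ + t / n)) ∂μ
        = (∫ ω, (Y ω + V (X 0 ω) - 1) ∂μ) + (∫ _ω : Ω, b * (δ + t / n) ∂μ) :=
      integral_add hZ2 (integrable_const _)
    have eB : ∫ ω, (Y ω + V (X 0 ω) - 1) ∂μ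
        = (∫ ω, (Y ω + V (X 0 ω)) ∂μ) - ∫ _ω : Ω, (1:ℝ) ∂μ :=
      integral_sub hZ1 (integrable_const 1)
    have eC : ∫ ω, (Y ω + V (X 0 ω)) ∂μ = (∫ ω, Y ω ∂μ) + ∫ ω, V (X 0 ω) ∂μ :=
      integral_add hY_int (hV_int 0 le_rfl)
    have eD : ∫ _ω : Ω, b * (δ + t / n) ∂μ = b * (δ + t / n) := by simp [measure_univ]
    have eE : ∫ _ω : Ω, (1:ℝ) ∂μ = 1 := by simp [measure_univ]
    have hX0i : ∫ ω, V (X 0 ω) ∂μ = V x := by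
      have h1 : ∫ ω, V (X 0 ω) ∂μ = ∫ _ω : Ω, V x ∂μ :=
        integral_congr_ae (hX0.mono fun ω h => by simp [h])
      rw [h1]; simp [measure_univ]
    linarith
  have key2 : ∀ t : ℝ, δ ≤ t → ∫⁻ ω, L t ω ∂μ ≤ ENNReal.ofReal (V x - 1 + b * δ) := by
    intro t ht
    refine ENNReal.le_of_forall_pos_le_add fun ε hε _ => ?_
    have hε' : (0:ℝ) < (ε:ℝ) := hε
    obtain ⟨n, hn, hbn⟩ : ∃ n : ℕ, 0 < n ∧ b * (t / n) ≤ (ε:ℝ) := by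
      obtain ⟨n, hn⟩ := exists_nat_gt (b * t / (ε:ℝ))
      refine ⟨n + 1, Nat.succ_pos n, ?_⟩
      have h1 : b * t / (ε:ℝ) < ((n:ℝ) + 1) := by
        push_cast
        linarith
      have h2 : b * t < (ε:ℝ) * ((n:ℝ) + 1) := by
        rw [div_lt_iff₀ hε'] at h1
        linarith [h1]
      have h3 : (0:ℝ) < ((n:ℝ) + 1) := by positivity
      rw [mul_div_assoc'] at *
      rw [div_le_iff₀ (by push_cast; linarith : (0:ℝ) < ((n:ℕ)+1:ℕ))]
      push_cast
      linarith
    calc ∫⁻ ω, L t ω ∂μ ≤ ENNReal.ofReal (V x - 1 + b * (δ + t / n)) := key t ht n hn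
      _ = ENNReal.ofReal ((V x - 1 + b * δ) + b * (t / n)) := by ring_nf
      _ ≤ ENNReal.ofReal (V x - 1 + b * δ) + ENNReal.ofReal (b * (t / n)) :=
          ENNReal.ofReal_add_le
      _ ≤ ENNReal.ofReal (V x - 1 + b * δ) + (ε : ℝ≥0∞) := by
          refine add_le_add_right ?_ _
          calc ENNReal.ofReal (b * (t / n)) ≤ ENNReal.ofReal (ε:ℝ) :=
                ENNReal.ofReal_le_ofReal hbn
            _ = (ε : ℝ≥0∞) := ENNReal.ofReal_coe_nnreal
  have hSS_meas : ∀ ω, MeasurableSet {s : ℝ | 0 ≤ s ∧ ENNReal.ofReal s < τ ω} := by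
    intro ω
    have : {s : ℝ | 0 ≤ s ∧ ENNReal.ofReal s < τ ω}
        = Set.Ici (0:ℝ) ∩ ENNReal.ofReal ⁻¹' (Set.Iio (τ ω)) := by
      ext s
      simp only [Set.mem_setOf_eq, Set.mem_inter_iff, Set.mem_Ici, Set.mem_preimage, Set.mem_Iio]
    rw [this]
    exact measurableSet_Ici.inter (ENNReal.measurable_ofReal measurableSet_Iio)
  have hsup : ∀ ω, (∫⁻ s in {s : ℝ | 0 ≤ s ∧ ENNReal.ofReal s < τ ω},
      ENNReal.ofReal (φ (V (X s ω)))) = ⨆ k : ℕ, L (δ + k) ω := by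
    intro ω
    have hmem_sub : ∀ k : ℕ, S (δ + k) ω ⊆ {s : ℝ | 0 ≤ s ∧ ENNReal.ofReal s < τ ω} :=
      fun k s hs => ⟨hs.1, hs.2.2⟩
    have hsup_eq : (fun s => ({s : ℝ | 0 ≤ s ∧ ENNReal.ofReal s < τ ω}).indicator
          (fun s => ENNReal.ofReal (g s ω)) s)
        = fun s => ⨆ k : ℕ, (S (δ + k) ω).indicator (fun s => ENNReal.ofReal (g s ω)) s := by
      funext s
      by_cases hs : s ∈ {s : ℝ | 0 ≤ s ∧ ENNReal.ofReal s < τ ω}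
      · rw [Set.indicator_of_mem hs]
        obtain ⟨k, hk⟩ := exists_nat_ge (s - δ)
        apply le_antisymm
        · refine le_iSup_of_le k (le_of_eq ?_)
          rw [Set.indicator_of_mem (show s ∈ S (δ + k) ω from ⟨hs.1, by linarith, hs.2⟩)]
        · exact iSup_le fun k => Set.indicator_le_self _ _ s
      · rw [Set.indicator_of_notMem hs]
        symm
        simp only [ENNReal.iSup_eq_zero]
        intro k
        exact Set.indicator_of_notMem (fun hmem => hs (hmem_sub k hmem)) _
    calc ∫⁻ s in {s : ℝ | 0 ≤ s ∧ ENNReal.ofReal s < τ ω}, ENNReal.ofReal (φ (V (X s ω)))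
        = ∫⁻ s in {s : ℝ | 0 ≤ s ∧ ENNReal.ofReal s < τ ω}, ENNReal.ofReal (g s ω) :=
          setLIntegral_congr_fun (hSS_meas ω) (fun s hs => by rw [hg_eq s hs.1 ω])
      _ = ∫⁻ s, ({s : ℝ | 0 ≤ s ∧ ENNReal.ofReal s < τ ω}).indicator
            (fun s => ENNReal.ofReal (g s ω)) s :=
          (lintegral_indicator (hSS_meas ω) _).symm
      _ = ∫⁻ s, ⨆ k : ℕ, (S (δ + k) ω).indicator (fun s => ENNReal.ofReal (g s ω)) s := by
          rw [hsup_eq]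
      _ = ⨆ k : ℕ, ∫⁻ s, (S (δ + k) ω).indicator (fun s => ENNReal.ofReal (g s ω)) s := by
          refine lintegral_iSup (fun k => ?_) ?_
          · exact (ENNReal.measurable_ofReal.comp (hg_path ω)).indicator (hS_meas _ ω)
          · intro k1 k2 hk
            refine Set.indicator_le_indicator_of_subset ?_ (fun s => zero_le)
            intro s hs
            refine ⟨hs.1, hs.2.1.trans ?_, hs.2.2⟩
            exact add_le_add_right (Nat.cast_le.2 hk) δ
      _ = ⨆ k : ℕ, L (δ + k) ω := by
          refine iSup_congr fun k => ?_
          rw [lintegral_indicator (hS_meas _ ω)]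
          simp only [hL_def]
          exact (setLIntegral_congr_fun (hS_meas _ ω)
            (fun s hs => by rw [hg_eq s hs.1 ω])).symm
  have hLmono : Monotone fun (k : ℕ) (ω : Ω) => L (δ + k) ω := by
    intro k1 k2 hk ω
    simp only [hL_def]
    refine lintegral_mono_set fun s hs => ?_
    refine ⟨hs.1, hs.2.1.trans ?_, hs.2.2⟩
    exact add_le_add_right (Nat.cast_le.2 hk) δ
  have main : (∫⁻ ω, (∫⁻ s in {s : ℝ | 0 ≤ s ∧ ENNReal.ofReal s < τ ω},
        ENNReal.ofReal (φ (V (X s ω)))) ∂μ) ≤ ENNReal.ofReal (V x - 1 + b * δ) := by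
    have h1 : (∫⁻ ω, (∫⁻ s in {s : ℝ | 0 ≤ s ∧ ENNReal.ofReal s < τ ω},
        ENNReal.ofReal (φ (V (X s ω)))) ∂μ) = ∫⁻ ω, ⨆ k : ℕ, L (δ + k) ω ∂μ :=
      lintegral_congr hsup
    rw [h1, lintegral_iSup (fun k => hL_meas _) hLmono]
    refine iSup_le fun k => key2 (δ + k) ?_
    have : (0:ℝ) ≤ (k:ℝ) := Nat.cast_nonneg k
    linarith
  refine ⟨main, ?_⟩
  have hLLmeas : Measurable fun ω => ∫⁻ s in {s : ℝ | 0 ≤ s ∧ ENNReal.ofReal s < τ ω},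
      ENNReal.ofReal (φ (V (X s ω))) := by
    have h1 : (fun ω => ∫⁻ s in {s : ℝ | 0 ≤ s ∧ ENNReal.ofReal s < τ ω},
        ENNReal.ofReal (φ (V (X s ω)))) = fun ω => ⨆ k : ℕ, L (δ + k) ω := funext hsup
    rw [h1]
    exact Measurable.iSup fun k => hL_meas _
  have hfin : ∀ᵐ ω ∂μ, (∫⁻ s in {s : ℝ | 0 ≤ s ∧ ENNReal.ofReal s < τ ω},
      ENNReal.ofReal (φ (V (X s ω)))) < ⊤ :=
    ae_lt_top hLLmeas (lt_of_le_of_lt main ENNReal.ofReal_lt_top).ne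
  filter_upwards [hfin] with ω hω
  by_contra hτtop
  have hτt : τ ω = ⊤ := top_le_iff.1 (not_lt.1 hτtop)
  have hSSeq : {s : ℝ | 0 ≤ s ∧ ENNReal.ofReal s < τ ω} = Set.Ici (0:ℝ) := by
    ext s
    simp [hτt, ENNReal.ofReal_lt_top]
  rw [hSSeq] at hω
  have hlow : ENNReal.ofReal (φ 1) * volume (Set.Ici (0:ℝ))
      ≤ ∫⁻ s in Set.Ici (0:ℝ), ENNReal.ofReal (φ (V (X s ω))) := by
    rw [← setLIntegral_const]
    refine setLIntegral_mono' measurableSet_Ici fun s _ => ?_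
    exact ENNReal.ofReal_le_ofReal
      (hφ_mono (Set.mem_Ici.2 le_rfl) (Set.mem_Ici.2 (hV_one _)) (hV_one _))
  rw [Real.volume_Ici, ENNReal.mul_top (by
    simp only [ne_eq, ENNReal.ofReal_eq_zero, not_le]
    exact hφ1_pos)] at hlow
  exact absurd (top_le_iff.1 hlow) hω.ne
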